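/- Let α ∈ (0,1), A, B > 0 and n ∈ ℕ with A(1-α)/((1-e^{-1})(n+B)^α) ≤ 1/2. Then Σ_{k≥n} e^{-k + A(k+B)^{1-α}} ≤ (2/(1-e^{-1})) e^{-n + A(n+B)^{1-α}}. -/

import Mathlib

open Real Set

theorem tail_sum_estimate_geometric
    (α A B : ℝ) (hα : α ∈ Set.Ioo (0:ℝ) 1) (hA : 0 < A) (hB : 0 < B)
    (n : ℕ)
    (hn : A * (1 - α) / ((1 - Real.exp (-1)) * (((n:ℝ) + B) ^ α)) ≤ 1/2) :
    (∑' k : ℕ, Real.exp (-((n:ℝ) + k) + A * (((n:ℝ) + k + B) ^ (1 - α))))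
      ≤ (2 / (1 - Real.exp (-1)))
        * Real.exp (-(n:ℝ) + A * (((n:ℝ) + B) ^ (1 - α))) := by
  obtain ⟨hα0, hα1⟩ := hα
  set x : ℝ := (n : ℝ) + B with hxdef
  have hx : 0 < x := by positivity
  set D : ℝ := 1 - Real.exp (-1) with hD
  have hD0 : 0 < D := by
    have : Real.exp (-1) < 1 := by
      rw [← Real.exp_zero]; exact Real.exp_lt_exp.2 (by norm_num)
    linarith
  have hD1 : D ≤ 1 := by
    have := Real.exp_pos (-1); simp [hD]; linarith
  set p : ℝ := 1 - α with hp
  have hp0 : 0 < p := by simp [hp]; linarith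
  have hp1 : p ≤ 1 := by simp [hp]; linarith
  set c : ℝ := A * p / x ^ α with hc
  have hc0 : 0 < c := by positivity
  have hcD : c ≤ D / 2 := by
    have h1 : A * p / (D * x ^ α) ≤ 1/2 := hn
    have hxα : (0:ℝ) < x ^ α := by positivity
    rw [hc, div_le_div_iff₀ hxα (by norm_num)]
    rw [div_le_div_iff₀ (by positivity) (by norm_num)] at h1
    nlinarith
  have hchalf : c ≤ 1/2 := by linarith
  have hc1 : c < 1 := by linarith
  have hsplit : x ^ p * x ^ α = x := by
    rw [← Real.rpow_add hx]
    have : p + α = 1 := by simp [hp]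
    rw [this, Real.rpow_one]
  -- key pointwise bound on the rpow part
  have key : ∀ k : ℕ, A * ((x + k) ^ p) ≤ A * x ^ p + c * k := by
    intro k
    have hk0 : (0:ℝ) ≤ k := Nat.cast_nonneg k
    have h1 : (x + k) ^ p = x ^ p * (1 + k / x) ^ p := by
      rw [← Real.mul_rpow hx.le (by positivity)]
      field_simp
    have h2 : (1 + (k:ℝ) / x) ^ p ≤ 1 + p * (k / x) := by
      refine rpow_one_add_le_one_add_mul_self ?_ hp0.le hp1
      have : (0:ℝ) ≤ (k:ℝ) / x := by positivity
      linarith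
    have h3 : A * ((x + k) ^ p) ≤ A * x ^ p * (1 + p * (k / x)) := by
      rw [h1, ← mul_assoc]
      exact mul_le_mul_of_nonneg_left h2 (by positivity)
    have him : x ^ p / x = 1 / x ^ α := by
      rw [div_eq_div_iff hx.ne' (by positivity : (0:ℝ) < x ^ α).ne', one_mul]
      exact hsplit
    have h4 : A * x ^ p * (1 + p * (k / x)) = A * x ^ p + c * k := by
      calc A * x ^ p * (1 + p * (k / x))
          = A * x ^ p + A * p * k * (x ^ p / x) := by ring
        _ = A * x ^ p + A * p * k * (1 / x ^ α) := by rw [him]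
        _ = A * x ^ p + c * k := by rw [hc]; ring
    linarith
  set r : ℝ := Real.exp (c - 1) with hr
  have hr0 : 0 ≤ r := (Real.exp_pos _).le
  have hr1 : r < 1 := by
    rw [hr, Real.exp_lt_one_iff]
    linarith
  set T0 : ℝ := Real.exp (-(n:ℝ) + A * (x ^ p)) with hT0
  have termbound : ∀ k : ℕ,
      Real.exp (-((n:ℝ) + k) + A * (((n:ℝ) + k + B) ^ p)) ≤ T0 * r ^ k := by
    intro k
    have hbase : (n:ℝ) + k + B = x + k := by rw [hxdef]; ring
    rw [hbase, hT0, hr, ← Real.exp_nat_mul, ← Real.exp_add, Real.exp_le_exp]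
    have := key k
    nlinarith [Nat.cast_nonneg (α := ℝ) k]
  have hgeo : Summable (fun k : ℕ => T0 * r ^ k) :=
    (summable_geometric_of_lt_one hr0 hr1).mul_left T0
  have hsum : Summable (fun k : ℕ =>
      Real.exp (-((n:ℝ) + k) + A * (((n:ℝ) + k + B) ^ p))) :=
    Summable.of_nonneg_of_le (fun k => (Real.exp_pos _).le) termbound hgeo
  have hinv : (1 - r)⁻¹ ≤ 2 / D := by
    have hconv := convexOn_exp.2 (Set.mem_univ (-1:ℝ)) (Set.mem_univ (0:ℝ))
      (by linarith : (0:ℝ) ≤ 1 - c) hc0.le (by ring)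
    simp only [smul_eq_mul, mul_zero, mul_neg_one, add_zero, Real.exp_zero, mul_one] at hconv
    have hrle : r ≤ (1 - c) * Real.exp (-1) + c := by
      rw [hr]
      convert hconv using 2
      exacts [rfl, by ring]
    have h1r : D / 2 ≤ 1 - r := by
      have hE := Real.exp_pos (-1)
      have : (1 - c) * Real.exp (-1) + c = 1 - (1 - c) * D := by rw [hD]; ring
      nlinarith
    rw [← inv_div D 2]
    exact inv_anti₀ (by positivity) h1r
  calc (∑' k : ℕ, Real.exp (-((n:ℝ) + k) + A * (((n:ℝ) + k + B) ^ p)))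
      ≤ ∑' k : ℕ, T0 * r ^ k := Summable.tsum_le_tsum termbound hsum hgeo
    _ = T0 * (1 - r)⁻¹ := by rw [tsum_mul_left, tsum_geometric_of_lt_one hr0 hr1]
    _ ≤ T0 * (2 / D) := by
        exact mul_le_mul_of_nonneg_left hinv (Real.exp_pos _).le
    _ = (2 / D) * T0 := by ring
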